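/- If the actual (risk-neutral) one-period nominal rates exceed the technical rate in the sense that all discount factors satisfy E[1/B^n_t] < (1+i)^{−t} for t ≥ 1, and if two cash-flow streams (a_t) and (b_t) have equal present value under discounting at rate i (Σ_t a_t (1+i)^{−t} = Σ_t b_t (1+i)^{−t}) with (a_t − b_t) changing sign exactly once from positive to negative (a_t ≥ b_t for t < T and a_t ≤ b_t for t ≥ T, not all equal), then Σ_t a_t E[1/B^n_t] > Σ_t b_t E[1/B^n_t] whenever the market discount factors d_t = E[1/B^n_t] satisfy d_t/(1+i)^{−t} strictly decreasing in t. -/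

import Mathlib

open Finset

/-- One-crossing dominance: if two cash-flow streams have equal present value at the
technical rate `i`, the stream that is front-loaded (single sign change from `+` to `-`)
has strictly larger value under market discount factors whose ratio to the technical
discount factors is strictly decreasing. -/
theorem front_loading_increases_value
    (N : ℕ) (a b d : ℕ → ℝ) (i : ℝ) (hi : -1 < i)
    (hd0 : d 0 = 1) (hdpos : ∀ t, 0 < d t)
    (hd_lt : ∀ t, 1 ≤ t → d t < ((1 + i) ^ t)⁻¹)
    (hw : StrictAnti (fun t : ℕ => d t * (1 + i) ^ t))
    (hsupp : ∀ t, N ≤ t → a t = 0 ∧ b t = 0)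
    (hpv : (∑ t ∈ range N, a t * ((1 + i) ^ t)⁻¹) =
           ∑ t ∈ range N, b t * ((1 + i) ^ t)⁻¹)
    (T : ℕ)
    (hcross1 : ∀ t, t < T → b t ≤ a t)
    (hcross2 : ∀ t, T ≤ t → a t ≤ b t)
    (hne : ∃ t, a t ≠ b t) :
    (∑ t ∈ range N, b t * d t) < ∑ t ∈ range N, a t * d t := by
  have hpos : (0:ℝ) < 1 + i := by linarith
  set c : ℕ → ℝ := fun t => (a t - b t) * ((1 + i) ^ t)⁻¹ with hc
  set w : ℕ → ℝ := fun t => d t * (1 + i) ^ t with hwdef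
  have hpowpos : ∀ t : ℕ, (0:ℝ) < ((1 + i) ^ t)⁻¹ := fun t =>
    inv_pos.mpr (pow_pos hpos t)
  have hsum0 : ∑ t ∈ range N, c t = 0 := by
    simp only [hc, sub_mul]
    rw [Finset.sum_sub_distrib, hpv, sub_self]
  have hcw : ∀ t, c t * w t = (a t - b t) * d t := by
    intro t
    have hne' : ((1 + i) ^ t : ℝ) ≠ 0 := (pow_pos hpos t).ne'
    field_simp [hc, hwdef]
    simp only [hc, hwdef]
    rw [mul_mul_mul_comm, inv_mul_cancel₀ hne', mul_one, sub_mul]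
  -- signs of c
  have hsign1 : ∀ t, t < T → 0 ≤ c t := fun t ht =>
    mul_nonneg (by linarith [hcross1 t ht]) (hpowpos t).le
  have hsign2 : ∀ t, T ≤ t → c t ≤ 0 := fun t ht =>
    mul_nonpos_of_nonpos_of_nonneg (by linarith [hcross2 t ht]) (hpowpos t).le
  -- there is t1 < N with 0 < c t1, hence t1 < T
  obtain ⟨t0, ht0⟩ := hne
  have ht0N : t0 < N := by
    by_contra h
    push_neg at h
    obtain ⟨ha0, hb0⟩ := hsupp t0 h
    exact ht0 (by rw [ha0, hb0])
  have hct0 : c t0 ≠ 0 := by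
    simp only [hc]
    exact mul_ne_zero (sub_ne_zero.mpr ht0) (hpowpos t0).ne'
  have hex : ∃ t1, t1 ∈ range N ∧ 0 < c t1 := by
    by_contra h
    push_neg at h
    have hlt : ∑ t ∈ range N, c t < ∑ t ∈ range N, (0:ℝ) := by
      apply Finset.sum_lt_sum
      · intro t htm
        exact h t htm
      · refine ⟨t0, mem_range.mpr ht0N, ?_⟩
        exact lt_of_le_of_ne (h t0 (mem_range.mpr ht0N)) hct0
    simp [hsum0] at hlt
  obtain ⟨t1, ht1m, ht1pos⟩ := hex
  have ht1T : t1 < T := by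
    by_contra h
    push_neg at h
    linarith [hsign2 t1 h]
  -- main inequality
  have key : 0 < ∑ t ∈ range N, c t * (w t - w T) := by
    have := Finset.sum_lt_sum (f := fun _ : ℕ => (0:ℝ))
      (g := fun t => c t * (w t - w T)) (s := range N)
      (by
        intro t _
        rcases lt_trichotomy t T with hlt | heq | hgt
        · exact mul_nonneg (hsign1 t hlt) (sub_nonneg.mpr (hw hlt).le)
        · simp [heq]
        · have h1 := mul_nonneg (neg_nonneg.mpr (hsign2 t hgt.le))
            (sub_nonneg.mpr (hw hgt).le)
          have h2 : c t * (w t - w T) = -c t * (w T - w t) := by ring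
          show (0:ℝ) ≤ c t * (w t - w T)
          linarith)
      ⟨t1, ht1m, mul_pos ht1pos (sub_pos.mpr (hw ht1T))⟩
    simpa using this
  have expand : ∑ t ∈ range N, c t * (w t - w T) = ∑ t ∈ range N, c t * w t := by
    simp only [mul_sub]
    rw [Finset.sum_sub_distrib, ← Finset.sum_mul, hsum0]
    ring
  have : 0 < ∑ t ∈ range N, (a t - b t) * d t := by
    rw [← Finset.sum_congr rfl (fun t _ => hcw t), ← expand]
    exact key
  have : 0 < (∑ t ∈ range N, a t * d t) - ∑ t ∈ range N, b t * d t := by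
    rw [← Finset.sum_sub_distrib]
    simpa [sub_mul] using this
  linarith
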